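/- Let U and W be ultrafilters on sets X and Y respectively. Then U is W-nonregular (i.e., U is not W-regular) if and only if the left and right tensor products coincide: U ⋉ W = U ⋊ W. -/
import Mathlib


open Filter Set Cardinal

universe u v w

/-- The left tensor product `F ⋉ G` of two filters. -/
def ltimes {X : Type u} {Y : Type v} (F : Filter X) (G : Filter Y) :
    Filter (X × Y) where
  sets := {R | {x | {y | (x, y) ∈ R} ∈ G} ∈ F}
  univ_sets := by simp
  sets_of_superset := by
    intro R S hR hRS
    refine Filter.mem_of_superset hR ?_
    intro x hx
    exact Filter.mem_of_superset hx fun y hy => hRS hy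
  inter_sets := by
    intro R S hR hS
    refine Filter.mem_of_superset (Filter.inter_mem hR hS) ?_
    rintro x ⟨hx1, hx2⟩
    exact Filter.inter_mem hx1 hx2

/-- The right tensor product `F ⋊ G` of two filters. -/
def rtimes {X : Type u} {Y : Type v} (F : Filter X) (G : Filter Y) :
    Filter (X × Y) where
  sets := {R | {y | {x | (x, y) ∈ R} ∈ F} ∈ G}
  univ_sets := by simp
  sets_of_superset := by
    intro R S hR hRS
    refine Filter.mem_of_superset hR ?_
    intro y hy
    exact Filter.mem_of_superset hy fun x hx => hRS hx
  inter_sets := by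
    intro R S hR hS
    refine Filter.mem_of_superset (Filter.inter_mem hR hS) ?_
    rintro y ⟨hy1, hy2⟩
    exact Filter.inter_mem hy1 hy2

/-- `IsFClosed F G` means: `G` is `F`-closed. -/
def IsFClosed {X : Type u} {Y : Type v} (F : Filter X) (G : Filter Y) : Prop :=
  ∀ B : X → Set Y, (∀ x, B x ∈ G) → ∃ A ∈ F, (⋂ x ∈ A, B x) ∈ G

/-- `IsRegularFor F G` means: `F` is `G`-regular. -/
def IsRegularFor {X : Type u} {Y : Type v} (F : Filter X) (G : Filter Y) : Prop :=
  ∃ A : Y → Set X, (∀ y, A y ∈ F) ∧ ∀ B : Set Y, Bᶜ ∉ G → (⋂ y ∈ B, A y) = ∅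

/-- The Katetov order on filters: `G ≤kat H` iff some pushforward of `H` extends `G`. -/
def Katetov {Y : Type u} {Z : Type v} (G : Filter Y) (H : Filter Z) : Prop :=
  ∃ f : Z → Y, Filter.map f H ≤ G

/-- A filter is an ultrafilter. -/
def IsUltra {α : Type u} (F : Filter α) : Prop :=
  ∃ V : Ultrafilter α, (V : Filter α) = F

/-- `(λ, η)`-indecomposability of a filter. -/
def Indecomposable {X : Type u} (F : Filter X) (lam eta : Cardinal.{u}) : Prop :=
  ∀ P : Set (Set X), #P ≤ eta → ⋃₀ P ∈ F →
    ∃ Q ⊆ P, #Q < lam ∧ ⋃₀ Q ∈ F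

/-- `λ`-decomposability: the negation of `(λ, λ)`-indecomposability. -/
def Decomposable {X : Type u} (F : Filter X) (lam : Cardinal.{u}) : Prop :=
  ¬ Indecomposable F lam lam

/-- `(κ, δ)`-regularity of a filter. -/
def CardRegular {X : Type u} (F : Filter X) (kappa delta : Cardinal.{u}) : Prop :=
  ∃ B : delta.out → Set X, (∀ α, B α ∈ F) ∧
    ∀ σ : Set delta.out, kappa ≤ #σ → (⋂ α ∈ σ, B α) = ∅

/-- The Fréchet filter `F_λ(λ)`: subsets of (a set of size) `λ` whose complement
has cardinality less than `λ`. -/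
def frechetFilter (lam : Cardinal.{u}) (h : ℵ₀ ≤ lam) : Filter lam.out where
  sets := {A | #(Aᶜ : Set lam.out) < lam}
  univ_sets := by
    have : #((Set.univ : Set lam.out)ᶜ : Set lam.out) = 0 := by simp
    simp only [Set.mem_setOf_eq, this]
    exact lt_of_lt_of_le aleph0_pos h
  sets_of_superset := by
    intro A B hA hAB
    exact lt_of_le_of_lt (Cardinal.mk_le_mk_of_subset (Set.compl_subset_compl.mpr hAB)) hA
  inter_sets := by
    intro A B hA hB
    simp only [Set.mem_setOf_eq, Set.compl_inter]
    exact lt_of_le_of_lt (Cardinal.mk_union_le _ _) (Cardinal.add_lt_of_lt h hA hB)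

/-- The dual of a filter `F` on `X`: the family of complements of members of `F`. -/
def dualFamily {X : Type u} (F : Filter X) : Set (Set X) := {s | sᶜ ∈ F}

/-- The fine filter `𝔽(F)` on the dual of `F`, generated by the sets
`{σ ∈ F* | x ∈ σ}` for `x ∈ X`. -/
def fineFilter {X : Type u} (F : Filter X) : Filter (dualFamily F) :=
  Filter.generate (Set.range fun x : X => {σ : dualFamily F | x ∈ σ.1})

theorem nonregular_iff_tensor_comm {X : Type u} {Y : Type v}
    (U : Ultrafilter X) (W : Ultrafilter Y) :
    ¬ IsRegularFor (U : Filter X) (W : Filter Y) ↔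
      ltimes (U : Filter X) (W : Filter Y) = rtimes (U : Filter X) (W : Filter Y) := by
  classical
  have memL : ∀ R : Set (X × Y),
      R ∈ ltimes (U : Filter X) (W : Filter Y) ↔
        {x | {y | (x, y) ∈ R} ∈ (W : Filter Y)} ∈ (U : Filter X) := fun R => Iff.rfl
  have memR : ∀ R : Set (X × Y),
      R ∈ rtimes (U : Filter X) (W : Filter Y) ↔
        {y | {x | (x, y) ∈ R} ∈ (U : Filter X)} ∈ (W : Filter Y) := fun R => Iff.rfl
  constructor
  · intro hnr
    by_contra hne
    apply hnr
    -- get R ∈ rtimes with Rᶜ ∈ ltimes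
    rw [Filter.ext_iff] at hne
    push_neg at hne
    obtain ⟨R0, hR0⟩ := hne
    have key : ∃ R : Set (X × Y), R ∈ rtimes (U : Filter X) (W : Filter Y) ∧
        Rᶜ ∈ ltimes (U : Filter X) (W : Filter Y) := by
      rcases hR0 with ⟨h1, h2⟩ | ⟨h1, h2⟩
      · -- R0 ∈ ltimes, R0 ∉ rtimes
        refine ⟨R0ᶜ, ?_, ?_⟩
        · rw [memR] at h2 ⊢
          have := (Ultrafilter.compl_mem_iff_notMem (s := {y | {x | (x, y) ∈ R0} ∈ (U : Filter X)})).2 h2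
          refine Filter.mem_of_superset this ?_
          intro y hy
          exact (Ultrafilter.compl_mem_iff_notMem).2 hy
        · rw [compl_compl]; exact h1
      · exact ⟨R0, h2, by
          show R0ᶜ ∈ ltimes (U : Filter X) (W : Filter Y)
          rw [memL] at h1 ⊢
          have := (Ultrafilter.compl_mem_iff_notMem (s := {x | {y | (x, y) ∈ R0} ∈ (W : Filter Y)})).2 h1
          refine Filter.mem_of_superset this ?_
          intro x hx
          exact (Ultrafilter.compl_mem_iff_notMem).2 hx⟩
    obtain ⟨R, hRr, hRl⟩ := key
    rw [memR] at hRr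
    rw [memL] at hRl
    set C : Set X := {x | {y | (x, y) ∈ Rᶜ} ∈ (W : Filter Y)} with hCdef
    set B' : Set Y := {y | {x | (x, y) ∈ R} ∈ (U : Filter X)} with hB'def
    refine ⟨fun y => if h : {x | (x, y) ∈ R} ∈ (U : Filter X) then C ∩ {x | (x, y) ∈ R} else C,
      ?_, ?_⟩
    · intro y
      by_cases h : {x | (x, y) ∈ R} ∈ (U : Filter X)
      · simp only [h, dif_pos]
        exact Filter.inter_mem hRl h
      · simp only [h, dif_neg, not_false_iff]
        exact hRl
    · intro B hB
      have hBW : B ∈ (W : Filter Y) := (Ultrafilter.compl_notMem_iff).1 hB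
      have hBB' : B ∩ B' ∈ (W : Filter Y) := Filter.inter_mem hBW hRr
      rw [Set.eq_empty_iff_forall_notMem]
      intro x hx
      simp only [Set.mem_iInter] at hx
      -- for all y ∈ B ∩ B', x ∈ C and (x,y) ∈ R
      have hxR : ∀ y ∈ B ∩ B', x ∈ C ∧ (x, y) ∈ R := by
        rintro y ⟨hyB, hyB'⟩
        have hcond : {x | (x, y) ∈ R} ∈ (U : Filter X) := hyB'
        have := hx y hyB
        rw [dif_pos hcond] at this
        exact ⟨this.1, this.2⟩
      have hne : (B ∩ B').Nonempty := Ultrafilter.nonempty_of_mem hBB'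
      obtain ⟨y0, hy0⟩ := hne
      have hxC : x ∈ C := (hxR y0 hy0).1
      have hsub : B ∩ B' ⊆ {y | (x, y) ∈ R} := fun y hy => (hxR y hy).2
      have hRW : {y | (x, y) ∈ R} ∈ (W : Filter Y) := Filter.mem_of_superset hBB' hsub
      have : {y | (x, y) ∈ R} ∉ (W : Filter Y) :=
        (Ultrafilter.compl_mem_iff_notMem (s := {y | (x, y) ∈ R})).1 hxC
      exact this hRW
  · intro heq
    rintro ⟨A, hA, hEmpty⟩
    set R : Set (X × Y) := {p | p.1 ∈ A p.2} with hRdef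
    have hRr : R ∈ rtimes (U : Filter X) (W : Filter Y) := by
      rw [memR]
      have : {y | {x | (x, y) ∈ R} ∈ (U : Filter X)} = Set.univ := by
        ext y; simp only [Set.mem_setOf_eq, Set.mem_univ, iff_true]
        exact hA y
      rw [this]; exact Filter.univ_mem
    have hRl : R ∈ ltimes (U : Filter X) (W : Filter Y) := by rw [heq]; exact hRr
    rw [memL] at hRl
    obtain ⟨x, hx⟩ := Ultrafilter.nonempty_of_mem hRl
    have hBx : {y | (x, y) ∈ R} ∈ (W : Filter Y) := hx
    have hBc : {y | (x, y) ∈ R}ᶜ ∉ (W : Filter Y) :=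
      (Ultrafilter.compl_notMem_iff).2 hBx
    have := hEmpty {y | (x, y) ∈ R} hBc
    have hxmem : x ∈ ⋂ y ∈ {y | (x, y) ∈ R}, A y := by
      simp only [Set.mem_iInter]
      intro y hy
      exact hy
    rw [this] at hxmem
    exact hxmem
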